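/- The map F(x,y) = (φ(y) + ψ(x), χ(y) − ω(x)) from ℝ² to ℝ² is injective, where φ(y) = Σ_{i=0}^{m1} a_i y^{2i+1}, ψ(x) = Σ_{i=0}^{m2} b_i x^{2i+1}, χ(y) = Σ_{i=0}^{m3} c_i y^{2i+1}, ω(x) = Σ_{i=0}^{m2} d_i x^{2i+1}, with all coefficients nonnegative, b_0 c_0 + a_0 d_0 > 0, a_{m1} > 0, b_{m2} > 0, d_{m2} > 0, and m1 > max{m2, m3} ≥ 0. -/

import Mathlib

open Finset

lemma oddpoly_mono (n : ℕ) (e : ℕ → ℝ) (he : ∀ i < n, 0 ≤ e i) :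
    Monotone (fun x : ℝ => ∑ i ∈ range n, e i * x ^ (2 * i + 1)) := by
  intro x y hxy
  apply Finset.sum_le_sum
  intro i hi
  exact mul_le_mul_of_nonneg_left
    (((odd_two_mul_add_one i).strictMono_pow).monotone hxy) (he i (mem_range.mp hi))

lemma oddpoly_strictMono (n : ℕ) (e : ℕ → ℝ) (he : ∀ i ≤ n, 0 ≤ e i)
    (hen : 0 < e n) :
    StrictMono (fun x : ℝ => ∑ i ∈ range (n + 1), e i * x ^ (2 * i + 1)) := by
  simp only [Finset.sum_range_succ]
  exact (oddpoly_mono n e (fun i hi => he i hi.le)).add_strictMono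
    (((odd_two_mul_add_one n).strictMono_pow).const_mul hen)

theorem example2_injective (m1 m2 m3 : ℕ) (hm : max m2 m3 < m1)
    (a b c d : ℕ → ℝ)
    (ha : ∀ i ≤ m1, 0 ≤ a i) (hb : ∀ i ≤ m2, 0 ≤ b i)
    (hc : ∀ i ≤ m3, 0 ≤ c i) (hd : ∀ i ≤ m2, 0 ≤ d i)
    (hpos : 0 < b 0 * c 0 + a 0 * d 0)
    (ham1 : 0 < a m1) (hbm2 : 0 < b m2) (hdm2 : 0 < d m2) :
    Function.Injective (fun p : ℝ × ℝ =>
      (∑ i ∈ range (m1 + 1), a i * p.2 ^ (2 * i + 1) +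
         ∑ i ∈ range (m2 + 1), b i * p.1 ^ (2 * i + 1),
       ∑ i ∈ range (m3 + 1), c i * p.2 ^ (2 * i + 1) -
         ∑ i ∈ range (m2 + 1), d i * p.1 ^ (2 * i + 1))) := by
  have hφ := oddpoly_strictMono m1 a ha ham1
  have hψ := oddpoly_strictMono m2 b hb hbm2
  have hω := oddpoly_strictMono m2 d hd hdm2
  have hχ := oddpoly_mono (m3 + 1) c (fun i hi => hc i (Nat.lt_succ_iff.mp hi))
  intro p q h
  simp only [Prod.mk.injEq] at h
  obtain ⟨h1, h2⟩ := h
  have hx : p.1 = q.1 := by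
    rcases lt_trichotomy p.1 q.1 with hlt | heq | hgt
    · exfalso
      have hψlt := hψ hlt
      have hωlt := hω hlt
      have hy : q.2 < p.2 := hφ.lt_iff_lt.mp (by dsimp at hψlt ⊢; linarith)
      have := hχ hy.le
      dsimp at this hωlt
      linarith
    · exact heq
    · exfalso
      have hψlt := hψ hgt
      have hωlt := hω hgt
      have hy : p.2 < q.2 := hφ.lt_iff_lt.mp (by dsimp at hψlt ⊢; linarith)
      have := hχ hy.le
      dsimp at this hωlt
      linarith
  have hy : p.2 = q.2 := by
    apply hφ.injective
    have : (∑ i ∈ range (m2 + 1), b i * p.1 ^ (2 * i + 1)) =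
        (∑ i ∈ range (m2 + 1), b i * q.1 ^ (2 * i + 1)) := by rw [hx]
    dsimp
    linarith
  exact Prod.ext hx hy
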